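/- Let P, Q, R be bounded projections on a Hilbert space H such that all pairwise differences are compact. Then the Fredholm index of RQP : range P → range R equals the index of QP : range P → range Q plus the index of RQ : range Q → range R. -/

import Mathlib

open Module Metric Filter

/-- The (Fredholm) index of a bounded operator: `dim ker − dim coker`. -/
noncomputable def findex {E F : Type} [NormedAddCommGroup E] [NormedSpace ℂ E]
    [NormedAddCommGroup F] [NormedSpace ℂ F] (T : E →L[ℂ] F) : ℤ :=
  (Module.finrank ℂ (LinearMap.ker (T : E →ₗ[ℂ] F)) : ℤ)
    - Module.finrank ℂ (F ⧸ LinearMap.range (T : E →ₗ[ℂ] F))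

set_option linter.unusedSectionVars false
set_option linter.unusedVariables false
set_option linter.unnecessarySimpa false

/-- If the norm on a closed submodule `N` is dominated by a compact operator `K`,
then `N` is finite dimensional (Riesz). -/
lemma findim_of_norm_le_compact {H : Type} [NormedAddCommGroup H] [NormedSpace ℂ H]
    [CompleteSpace H] (N : Submodule ℂ H) (hN : IsClosed (N : Set H))
    (K : H →L[ℂ] H) (hK : IsCompactOperator ⇑K)
    (hbd : ∀ w ∈ N, ‖w‖ ≤ ‖K w‖) : FiniteDimensional ℂ N := by
  haveI : CompleteSpace N := hN.completeSpace_coe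
  apply FiniteDimensional.of_isCompact_closedBall₀ (𝕜 := ℂ) (one_pos)
  apply IsSeqCompact.isCompact
  intro u hu
  have hC : IsCompact (closure (⇑K '' closedBall 0 1)) :=
    hK.isCompact_closure_image_closedBall 1
  have hv : ∀ n, K (u n) ∈ closure (⇑K '' closedBall 0 1) := by
    intro n
    apply subset_closure
    exact Set.mem_image_of_mem _ (by simpa [mem_closedBall, dist_eq_norm] using hu n)
  obtain ⟨z, -, φ, hφ, hvz⟩ := hC.isSeqCompact hv
  have hcauchy : CauchySeq (fun n => u (φ n)) := by
    rw [Metric.cauchySeq_iff]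
    intro ε hε
    obtain ⟨M, hM⟩ := Metric.cauchySeq_iff.mp hvz.cauchySeq ε hε
    refine ⟨M, fun m hm n hn => ?_⟩
    have h1 : dist (u (φ m)) (u (φ n)) = ‖((u (φ m) : H) - u (φ n))‖ := by
      rw [Subtype.dist_eq, dist_eq_norm]
    have h2 : ‖((u (φ m) : H) - u (φ n))‖ ≤ ‖K ((u (φ m) : H) - u (φ n))‖ :=
      hbd _ (N.sub_mem (u (φ m)).2 (u (φ n)).2)
    have h3 : ‖K ((u (φ m) : H) - u (φ n))‖ = dist (K (u (φ m))) (K (u (φ n))) := by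
      rw [dist_eq_norm, map_sub]
    calc dist (u (φ m)) (u (φ n)) ≤ dist (K (u (φ m))) (K (u (φ n))) := by
          rw [h1, ← h3]; exact h2
      _ < ε := hM m hm n hn
  obtain ⟨l, hl⟩ := cauchySeq_tendsto_of_complete hcauchy
  refine ⟨l, ?_, φ, hφ, hl⟩
  exact Metric.isClosed_closedBall.mem_of_tendsto hl (Eventually.of_forall fun n => hu (φ n))


section AnalyticCore

variable {E : Type} [NormedAddCommGroup E] [InnerProductSpace ℂ E] [CompleteSpace E]

lemma findim_ker_of_compact (A : E →L[ℂ] E) (hc : IsCompactOperator ⇑(A - 1)) :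
    FiniteDimensional ℂ (LinearMap.ker (A : E →ₗ[ℂ] E)) := by
  apply findim_of_norm_le_compact (LinearMap.ker (A : E →ₗ[ℂ] E)) (ContinuousLinearMap.isClosed_ker A)
    (A - 1) hc
  intro w hw
  have : A w = 0 := hw
  simp [ContinuousLinearMap.sub_apply, this]

lemma bdd_below_of_compact (A : E →L[ℂ] E) (hc : IsCompactOperator ⇑(A - 1)) :
    ∃ c > (0:ℝ), ∀ x ∈ (LinearMap.ker (A : E →ₗ[ℂ] E))ᗮ, c * ‖x‖ ≤ ‖A x‖ := by
  by_contra hcon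
  push_neg at hcon
  have hex : ∀ n : ℕ, ∃ u : E, u ∈ (LinearMap.ker (A : E →ₗ[ℂ] E))ᗮ ∧ ‖u‖ = 1 ∧
      ‖A u‖ < (n+1:ℝ)⁻¹ := by
    intro n
    obtain ⟨x, hxN, hxlt⟩ := hcon ((n+1:ℝ)⁻¹) (by positivity)
    have hx0 : x ≠ 0 := by
      rintro rfl; simp at hxlt
    have hxn : (0:ℝ) < ‖x‖ := norm_pos_iff.mpr hx0
    refine ⟨(‖x‖⁻¹ : ℂ) • x, Submodule.smul_mem _ _ hxN, ?_, ?_⟩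
    · rw [norm_smul]
      simp [inv_mul_cancel₀ hxn.ne']
    · rw [map_smul, norm_smul]
      have h4 : ‖((‖x‖:ℂ))⁻¹‖ = ‖x‖⁻¹ := by
        simp
      rw [h4]
      calc ‖x‖⁻¹ * ‖A x‖ < ‖x‖⁻¹ * ((n+1:ℝ)⁻¹ * ‖x‖) := by
            apply mul_lt_mul_of_pos_left hxlt
            exact inv_pos.mpr hxn
        _ = (n+1:ℝ)⁻¹ := by field_simp
  choose u huN hu1 huA using hex
  have hC : IsCompact (closure (⇑(A-1) '' closedBall 0 1)) :=
    hc.isCompact_closure_image_closedBall 1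
  have hv : ∀ n, (A-1) (u n) ∈ closure (⇑(A-1) '' closedBall 0 1) := fun n =>
    subset_closure (Set.mem_image_of_mem _ (by simp [mem_closedBall, dist_eq_norm, (hu1 n).le]))
  obtain ⟨z, -, φ, hφ, hvz⟩ := hC.isSeqCompact hv
  have hAu : Tendsto (fun n => A (u (φ n))) atTop (nhds 0) := by
    have hsq : Tendsto (fun n => ((φ n : ℝ)+1)⁻¹) atTop (nhds 0) := by
      apply tendsto_inv_atTop_zero.comp
      apply tendsto_atTop_add_const_right
      exact tendsto_natCast_atTop_atTop.comp hφ.tendsto_atTop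
    rw [tendsto_zero_iff_norm_tendsto_zero]
    exact squeeze_zero (fun n => norm_nonneg _) (fun n => (huA (φ n)).le) hsq
  have huz : Tendsto (fun n => u (φ n)) atTop (nhds (-z)) := by
    have h5 := hAu.sub hvz
    rw [zero_sub] at h5
    exact h5.congr (fun n => by simp [ContinuousLinearMap.sub_apply])
  have hzN : -z ∈ (LinearMap.ker (A : E →ₗ[ℂ] E))ᗮ :=
    (LinearMap.ker (A : E →ₗ[ℂ] E)).isClosed_orthogonal.mem_of_tendsto huz
      (Eventually.of_forall fun n => huN (φ n))
  have hz1 : ‖-z‖ = 1 := by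
    have := (continuous_norm.tendsto (-z)).comp huz
    have h2 : Tendsto (fun n => ‖u (φ n)‖) atTop (nhds 1) := by
      simpa [hu1] using tendsto_const_nhds (α := ℝ) (x := 1)
    exact tendsto_nhds_unique ((continuous_norm.tendsto (-z)).comp huz) h2
  have hzker : -z ∈ LinearMap.ker (A : E →ₗ[ℂ] E) := by
    have h1 : Tendsto (fun n => A (u (φ n))) atTop (nhds (A (-z))) :=
      (A.continuous.tendsto (-z)).comp huz
    have := tendsto_nhds_unique h1 hAu
    simpa [LinearMap.mem_ker] using this
  have : (-z) = 0 := by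
    have hd := (LinearMap.ker (A : E →ₗ[ℂ] E)).orthogonal_disjoint
    exact hd.le_bot ⟨hzker, hzN⟩
  rw [this] at hz1
  simp at hz1


local notation "⟪" x ", " y "⟫" => @inner ℂ _ _ x y

lemma findim_coker_of_compact (A : E →L[ℂ] E) (hc : IsCompactOperator ⇑(A - 1)) :
    FiniteDimensional ℂ (E ⧸ LinearMap.range (A : E →ₗ[ℂ] E)) := by
  set N := LinearMap.ker (A : E →ₗ[ℂ] E) with hNdef
  haveI : FiniteDimensional ℂ N := findim_ker_of_compact A hc
  haveI : CompleteSpace N := FiniteDimensional.complete ℂ N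
  obtain ⟨c, hc0, hbdd⟩ := bdd_below_of_compact A hc
  haveI : CompleteSpace Nᗮ := N.isClosed_orthogonal.completeSpace_coe
  set g : Nᗮ →L[ℂ] E := A.comp Nᗮ.subtypeL with hg
  have hanti : AntilipschitzWith (⟨c, hc0.le⟩ : NNReal)⁻¹ g := by
    apply g.antilipschitz_of_bound
    intro x
    have := hbdd x x.2
    change ‖x‖ ≤ c⁻¹ * ‖g x‖
    rw [le_inv_mul_iff₀ hc0]
    simpa [hg] using this
  have hrange_eq : (LinearMap.range (A : E →ₗ[ℂ] E) : Set E) = Set.range ⇑g := by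
    apply Set.Subset.antisymm
    · rintro y ⟨x, rfl⟩
      have hx : x ∈ N ⊔ Nᗮ := by
        rw [Submodule.sup_orthogonal_of_hasOrthogonalProjection]; trivial
      obtain ⟨a, ha, b, hb, rfl⟩ := Submodule.mem_sup.mp hx
      refine ⟨⟨b, hb⟩, ?_⟩
      have ha0 : A a = 0 := ha
      simp [hg, map_add, ha0]
    · rintro y ⟨x, rfl⟩
      exact ⟨x, rfl⟩
  have hclosed : IsClosed (LinearMap.range (A : E →ₗ[ℂ] E) : Set E) := by
    rw [hrange_eq]
    exact hanti.isClosed_range g.uniformContinuous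
  set M := LinearMap.range (A : E →ₗ[ℂ] E) with hM
  haveI : CompleteSpace M := hclosed.completeSpace_coe
  have hcompl : IsCompl M Mᗮ := Submodule.isCompl_orthogonal_of_hasOrthogonalProjection
  haveI : FiniteDimensional ℂ Mᗮ := by
    apply findim_of_norm_le_compact Mᗮ M.isClosed_orthogonal (A - 1) hc
    intro w hw
    have horth : ⟪A w, w⟫ = 0 := hw (A w) (LinearMap.mem_range_self _ w)
    have hAw : A w = w + (A - 1) w := by simp [ContinuousLinearMap.sub_apply]
    have hinner : ⟪w, w⟫ = -⟪(A - 1) w, w⟫ := by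
      have := horth
      rw [hAw, inner_add_left] at this
      linear_combination this
    have hnorm : ‖w‖^2 ≤ ‖(A - 1) w‖ * ‖w‖ := by
      have h1 : ‖⟪w, w⟫‖ = ‖w‖^2 := by
        rw [inner_self_eq_norm_sq_to_K, norm_pow, RCLike.norm_ofReal,
          abs_of_nonneg (norm_nonneg w)]
      calc ‖w‖^2 = ‖⟪w, w⟫‖ := h1.symm
        _ = ‖⟪(A - 1) w, w⟫‖ := by rw [hinner, norm_neg]
        _ ≤ ‖(A - 1) w‖ * ‖w‖ := norm_inner_le_norm _ _
    rcases eq_or_lt_of_le (norm_nonneg w) with h0 | h0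
    · simp [← h0]
    · exact le_of_mul_le_mul_right (by nlinarith [hnorm]) h0
  exact (M.quotientEquivOfIsCompl Mᗮ hcompl).symm.finiteDimensional


end AnalyticCore

section Alg

open LinearMap

variable {U V W : Type} [AddCommGroup U] [Module ℂ U] [AddCommGroup V] [Module ℂ V]
  [AddCommGroup W] [Module ℂ W]

lemma finrank_comap_subtype (p q : Submodule ℂ V) :
    finrank ℂ (Submodule.comap q.subtype p) = finrank ℂ ↥(p ⊓ q) := by
  have h : Submodule.comap q.subtype p = Submodule.comap q.subtype (p ⊓ q) := by
    ext x
    simp [x.2]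
  rw [h]
  exact (Submodule.comapSubtypeEquivOfLe inf_le_right).finrank_eq

set_option maxHeartbeats 1000000 in
lemma index_comp_aux (f : U →ₗ[ℂ] V) (g : V →ₗ[ℂ] W)
    (hkf : FiniteDimensional ℂ (ker f)) (hkg : FiniteDimensional ℂ (ker g))
    (hkgf : FiniteDimensional ℂ (ker (g ∘ₗ f)))
    (hcf : FiniteDimensional ℂ (V ⧸ range f))
    (hcg : FiniteDimensional ℂ (W ⧸ range g))
    (hcgf : FiniteDimensional ℂ (W ⧸ range (g ∘ₗ f))) :
    (finrank ℂ (ker (g ∘ₗ f)) : ℤ) - finrank ℂ (W ⧸ range (g ∘ₗ f)) =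
      ((finrank ℂ (ker f) : ℤ) - finrank ℂ (V ⧸ range f)) +
      ((finrank ℂ (ker g) : ℤ) - finrank ℂ (W ⧸ range g)) := by
  classical
  set a := finrank ℂ ↥(range f ⊓ ker g) with ha
  -- φ : ker (g ∘ f) → ker g  induced by f
  have hφmem : ∀ x : ker (g ∘ₗ f), f x ∈ ker g := fun x => by
    rw [LinearMap.mem_ker, ← LinearMap.comp_apply]
    exact x.2
  set φ : ker (g ∘ₗ f) →ₗ[ℂ] ker g :=
    (f.domRestrict (ker (g ∘ₗ f))).codRestrict (ker g) hφmem with hφ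
  have hkerφ : ker φ = Submodule.comap (ker (g ∘ₗ f)).subtype (ker f) := by
    ext x
    rw [LinearMap.mem_ker, Submodule.mem_comap, LinearMap.mem_ker, Subtype.ext_iff]; rfl
  have hrangeφ : range φ = Submodule.comap (ker g).subtype (range f ⊓ ker g) := by
    ext y
    constructor
    · rintro ⟨x, rfl⟩
      exact ⟨⟨x, rfl⟩, (hφmem x)⟩
    · rintro ⟨⟨x, hfx⟩, hyk⟩
      have hx : x ∈ ker (g ∘ₗ f) := by
        simp only [LinearMap.mem_ker, LinearMap.comp_apply]
        rw [hfx]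
        exact hyk
      exact ⟨⟨x, hx⟩, Subtype.ext hfx⟩
  -- claim 1
  have hkerf_le : ker f ≤ ker (g ∘ₗ f) := by
    intro x hx
    simp only [LinearMap.mem_ker, LinearMap.comp_apply] at *
    rw [hx, map_zero]
  have claim1 : finrank ℂ (ker (g ∘ₗ f)) = finrank ℂ (ker f) + a := by
    have rn := φ.finrank_range_add_finrank_ker
    rw [hkerφ, hrangeφ] at rn
    rw [(Submodule.comapSubtypeEquivOfLe hkerf_le).finrank_eq, finrank_comap_subtype,
      inf_assoc, inf_idem] at rn
    omega
  -- ψ : V ⧸ range f → W ⧸ range (g∘f)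
  have hle : range f ≤ Submodule.comap g (range (g ∘ₗ f)) := by
    rintro y ⟨x, rfl⟩
    exact ⟨x, rfl⟩
  set ψ : (V ⧸ range f) →ₗ[ℂ] (W ⧸ range (g ∘ₗ f)) :=
    Submodule.mapQ (range f) (range (g ∘ₗ f)) g hle with hψ
  have hrangegf_le : range (g ∘ₗ f) ≤ range g := by
    rintro y ⟨x, rfl⟩
    exact ⟨f x, rfl⟩
  set S : Submodule ℂ (W ⧸ range (g ∘ₗ f)) := (range g).map (range (g ∘ₗ f)).mkQ with hS
  have hrangeψ : range ψ = S := by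
    have hsurj : range ((range f).mkQ) = ⊤ := Submodule.range_mkQ _
    rw [hψ, hS]
    apply le_antisymm
    · rintro y ⟨x, rfl⟩
      obtain ⟨v, rfl⟩ := Submodule.mkQ_surjective _ x
      exact ⟨g v, ⟨v, rfl⟩, by simp [Submodule.mapQ_apply]⟩
    · rintro y ⟨w, ⟨v, rfl⟩, rfl⟩
      exact ⟨Submodule.Quotient.mk v, by simp [Submodule.mapQ_apply]⟩
  have hkerψ : ker ψ = (ker g).map (range f).mkQ := by
    apply le_antisymm
    · rintro x hx
      obtain ⟨v, rfl⟩ := Submodule.mkQ_surjective _ x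
      rw [LinearMap.mem_ker, hψ, Submodule.mkQ_apply, Submodule.mapQ_apply,
        Submodule.Quotient.mk_eq_zero] at hx
      obtain ⟨u, hu⟩ := hx
      refine ⟨v - f u, ?_, by simp⟩
      show v - f u ∈ ker g
      rw [LinearMap.mem_ker, map_sub]
      rw [LinearMap.comp_apply] at hu
      rw [hu]
      simp
    · rintro x ⟨v, hv, rfl⟩
      have hv0 : g v = 0 := hv
      rw [LinearMap.mem_ker, hψ, Submodule.mkQ_apply, Submodule.mapQ_apply,
        Submodule.Quotient.mk_eq_zero, hv0]
      exact Submodule.zero_mem _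
  -- dim of ker ψ via ρ
  set ρ : ker g →ₗ[ℂ] (V ⧸ range f) := (range f).mkQ ∘ₗ (ker g).subtype with hρ
  have hrangeρ : range ρ = (ker g).map (range f).mkQ := by
    rw [hρ, LinearMap.range_comp, Submodule.range_subtype]
  have hkerρ : ker ρ = Submodule.comap (ker g).subtype (range f) := by
    rw [hρ, LinearMap.ker_comp, Submodule.ker_mkQ]
  have hkerρ_rank : finrank ℂ (ker ρ) = a := by
    rw [hkerρ, finrank_comap_subtype]
  have claim_kerψ : finrank ℂ (ker ψ) + a = finrank ℂ (ker g) := by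
    have rn := ρ.finrank_range_add_finrank_ker
    rw [hrangeρ, hkerρ_rank, ← hkerψ] at rn
    omega
  -- claim 3 : dimension count in X := W ⧸ range (g∘f)
  have e1 : ((W ⧸ range (g ∘ₗ f)) ⧸ S) ≃ₗ[ℂ] W ⧸ range g :=
    Submodule.quotientQuotientEquivQuotient _ _ hrangegf_le
  have claim3 : finrank ℂ (W ⧸ range g) + finrank ℂ S = finrank ℂ (W ⧸ range (g ∘ₗ f)) := by
    rw [← e1.finrank_eq]
    exact Submodule.finrank_quotient_add_finrank S
  have rnψ : finrank ℂ (range ψ) + finrank ℂ (ker ψ) = finrank ℂ (V ⧸ range f) :=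
    ψ.finrank_range_add_finrank_ker
  rw [hrangeψ] at rnψ
  -- put it together
  omega


end Alg

section Helpers

variable {H : Type} [NormedAddCommGroup H] [InnerProductSpace ℂ H] [CompleteSpace H]

lemma proj_fix {P : H →L[ℂ] H} (hP : P.comp P = P) {x : H}
    (hx : x ∈ LinearMap.range (P : H →ₗ[ℂ] H)) : P x = x := by
  obtain ⟨y, rfl⟩ := hx
  show P (P y) = P y
  rw [← ContinuousLinearMap.comp_apply, hP]

lemma proj_range_closed {P : H →L[ℂ] H} (hP : P.comp P = P) :
    IsClosed ((LinearMap.range (P : H →ₗ[ℂ] H) : Submodule ℂ H) : Set H) := by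
  have : ((LinearMap.range (P : H →ₗ[ℂ] H) : Submodule ℂ H) : Set H) = {x | P x = x} := by
    ext x
    constructor
    · intro hx; exact proj_fix hP hx
    · intro hx; exact ⟨x, hx⟩
  rw [this]
  exact isClosed_eq P.continuous continuous_id

lemma isCompactOperator_restr {U V : Submodule ℂ H} (hV : IsClosed (V : Set H))
    {B : H →L[ℂ] H} (hB : IsCompactOperator ⇑B) (h : ∀ x ∈ U, B x ∈ V) :
    IsCompactOperator (fun x : U => (⟨B ↑x, h ↑x x.2⟩ : V)) :=
  (hB.comp_clm U.subtypeL).codRestrict (fun x => h ↑x x.2) hV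



lemma compact_perturb {U : Submodule ℂ H} (hU : IsClosed (U : Set H))
    (A : U →L[ℂ] U) (B : H →L[ℂ] H) (hB : IsCompactOperator ⇑B)
    (hmem : ∀ x ∈ U, B x ∈ U) (heq : ∀ x : U, (↑(A x) : H) = B ↑x) :
    IsCompactOperator ⇑A := by
  have h1 := isCompactOperator_restr hU hB hmem
  have h2 : ⇑A = fun x : U => (⟨B ↑x, hmem ↑x x.2⟩ : U) := by
    funext x; exact Subtype.ext (heq x)
  rwa [h2]

lemma compact_neg_sub {A B : H →L[ℂ] H} (h : IsCompactOperator ⇑(A - B)) :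
    IsCompactOperator ⇑(B - A) := by
  have := h.neg
  have heq : (-⇑(A - B)) = ⇑(B - A) := by
    funext x; simp
  rwa [heq] at this



end Helpers

section Atkinson

variable {E F : Type} [NormedAddCommGroup E] [InnerProductSpace ℂ E] [CompleteSpace E]
  [NormedAddCommGroup F] [InnerProductSpace ℂ F] [CompleteSpace F]

lemma atkinson (T : E →L[ℂ] F) (S : F →L[ℂ] E)
    (h1 : IsCompactOperator ⇑(S.comp T - 1)) (h2 : IsCompactOperator ⇑(T.comp S - 1)) :
    FiniteDimensional ℂ (LinearMap.ker (T : E →ₗ[ℂ] F)) ∧ FiniteDimensional ℂ (F ⧸ LinearMap.range (T : E →ₗ[ℂ] F)) := by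
  constructor
  · haveI := findim_ker_of_compact (S.comp T) h1
    apply Submodule.finiteDimensional_of_le (S₂ := LinearMap.ker ((S.comp T : E →L[ℂ] E) : E →ₗ[ℂ] E))
    intro x hx
    have hx0 : T x = 0 := hx
    show S (T x) = 0
    rw [hx0, map_zero]
  · haveI := findim_coker_of_compact (T.comp S) h2
    have hle : LinearMap.range ((T.comp S : F →L[ℂ] F) : F →ₗ[ℂ] F) ≤
        Submodule.comap (LinearMap.id : F →ₗ[ℂ] F) (LinearMap.range (T : E →ₗ[ℂ] F)) := by
      rintro y ⟨x, rfl⟩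
      exact ⟨S x, rfl⟩
    have hsurj : Function.Surjective
        (Submodule.mapQ (LinearMap.range ((T.comp S : F →L[ℂ] F) : F →ₗ[ℂ] F)) (LinearMap.range (T : E →ₗ[ℂ] F)) LinearMap.id hle) := by
      intro x
      obtain ⟨y, rfl⟩ := Submodule.mkQ_surjective _ x
      exact ⟨Submodule.Quotient.mk y, by rw [Submodule.mkQ_apply, Submodule.mapQ_apply]; rfl⟩
    exact Module.Finite.of_surjective _ hsurj


end Atkinson

lemma findex_comp {E F G : Type} [NormedAddCommGroup E] [NormedSpace ℂ E]
    [NormedAddCommGroup F] [NormedSpace ℂ F] [NormedAddCommGroup G] [NormedSpace ℂ G]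
    (T1 : E →L[ℂ] F) (T2 : F →L[ℂ] G)
    (i1 : FiniteDimensional ℂ (LinearMap.ker (T1 : E →ₗ[ℂ] F)))
    (i2 : FiniteDimensional ℂ (LinearMap.ker (T2 : F →ₗ[ℂ] G)))
    (i3 : FiniteDimensional ℂ (LinearMap.ker ((T2.comp T1 : E →L[ℂ] G) : E →ₗ[ℂ] G)))
    (i4 : FiniteDimensional ℂ (F ⧸ LinearMap.range (T1 : E →ₗ[ℂ] F)))
    (i5 : FiniteDimensional ℂ (G ⧸ LinearMap.range (T2 : F →ₗ[ℂ] G)))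
    (i6 : FiniteDimensional ℂ (G ⧸ LinearMap.range ((T2.comp T1 : E →L[ℂ] G) : E →ₗ[ℂ] G))) :
    findex (T2.comp T1) = findex T1 + findex T2 := by
  simp only [findex]
  exact index_comp_aux (T1 : E →ₗ[ℂ] F) (T2 : F →ₗ[ℂ] G) i1 i2 i3 i4 i5 i6



set_option maxHeartbeats 2000000 in
/-- Logarithmic property of the relative index: if `P, Q, R` are bounded projections
on a Hilbert space with pairwise compact differences, then the index of
`RQP : range P → range R` is the sum of the indices of `QP : range P → range Q` and of
`RQ : range Q → range R`. -/
theorem relative_index_logarithmic_property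
    {H : Type} [NormedAddCommGroup H] [InnerProductSpace ℂ H] [CompleteSpace H]
    (P Q R : H →L[ℂ] H)
    (hP : P.comp P = P) (hQ : Q.comp Q = Q) (hR : R.comp R = R)
    (hPQ : IsCompactOperator (⇑(P - Q)))
    (hQR : IsCompactOperator (⇑(Q - R)))
    (hPR : IsCompactOperator (⇑(P - R))) :
    findex ((((R.comp Q).comp P).comp (LinearMap.range (P : H →ₗ[ℂ] H)).subtypeL).codRestrict
        (LinearMap.range (R : H →ₗ[ℂ] H)) (fun x => LinearMap.mem_range_self (R : H →ₗ[ℂ] H) (Q (P (x : H))))) =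
      findex (((Q.comp P).comp (LinearMap.range (P : H →ₗ[ℂ] H)).subtypeL).codRestrict
        (LinearMap.range (Q : H →ₗ[ℂ] H)) (fun x => LinearMap.mem_range_self (Q : H →ₗ[ℂ] H) (P (x : H)))) +
      findex (((R.comp Q).comp (LinearMap.range (Q : H →ₗ[ℂ] H)).subtypeL).codRestrict
        (LinearMap.range (R : H →ₗ[ℂ] H)) (fun x => LinearMap.mem_range_self (R : H →ₗ[ℂ] H) (Q (x : H)))) := by
  -- pointwise idempotency
  have hP2 : ∀ y, P (P y) = P y := fun y => by rw [← ContinuousLinearMap.comp_apply, hP]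
  have hQ2 : ∀ y, Q (Q y) = Q y := fun y => by rw [← ContinuousLinearMap.comp_apply, hQ]
  have hR2 : ∀ y, R (R y) = R y := fun y => by rw [← ContinuousLinearMap.comp_apply, hR]
  have hEc := proj_range_closed hP
  have hFc := proj_range_closed hQ
  have hGc := proj_range_closed hR
  haveI : CompleteSpace (LinearMap.range (P : H →ₗ[ℂ] H)) := hEc.completeSpace_coe
  haveI : CompleteSpace (LinearMap.range (Q : H →ₗ[ℂ] H)) := hFc.completeSpace_coe
  haveI : CompleteSpace (LinearMap.range (R : H →ₗ[ℂ] H)) := hGc.completeSpace_coe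
  set T1 : (LinearMap.range (P : H →ₗ[ℂ] H)) →L[ℂ] (LinearMap.range (Q : H →ₗ[ℂ] H)) :=
    ((Q.comp P).comp (LinearMap.range (P : H →ₗ[ℂ] H)).subtypeL).codRestrict
      (LinearMap.range (Q : H →ₗ[ℂ] H)) (fun x => LinearMap.mem_range_self (Q : H →ₗ[ℂ] H) (P (x : H))) with hT1
  set T2 : (LinearMap.range (Q : H →ₗ[ℂ] H)) →L[ℂ] (LinearMap.range (R : H →ₗ[ℂ] H)) :=
    ((R.comp Q).comp (LinearMap.range (Q : H →ₗ[ℂ] H)).subtypeL).codRestrict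
      (LinearMap.range (R : H →ₗ[ℂ] H)) (fun x => LinearMap.mem_range_self (R : H →ₗ[ℂ] H) (Q (x : H))) with hT2
  set T3 : (LinearMap.range (P : H →ₗ[ℂ] H)) →L[ℂ] (LinearMap.range (R : H →ₗ[ℂ] H)) :=
    (((R.comp Q).comp P).comp (LinearMap.range (P : H →ₗ[ℂ] H)).subtypeL).codRestrict
      (LinearMap.range (R : H →ₗ[ℂ] H)) (fun x => LinearMap.mem_range_self (R : H →ₗ[ℂ] H) (Q (P (x : H)))) with hT3
  set S1 : (LinearMap.range (Q : H →ₗ[ℂ] H)) →L[ℂ] (LinearMap.range (P : H →ₗ[ℂ] H)) :=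
    ((P.comp Q).comp (LinearMap.range (Q : H →ₗ[ℂ] H)).subtypeL).codRestrict
      (LinearMap.range (P : H →ₗ[ℂ] H)) (fun x => LinearMap.mem_range_self (P : H →ₗ[ℂ] H) (Q (x : H))) with hS1
  set S3 : (LinearMap.range (R : H →ₗ[ℂ] H)) →L[ℂ] (LinearMap.range (P : H →ₗ[ℂ] H)) :=
    (((P.comp Q).comp R).comp (LinearMap.range (R : H →ₗ[ℂ] H)).subtypeL).codRestrict
      (LinearMap.range (P : H →ₗ[ℂ] H)) (fun x => LinearMap.mem_range_self (P : H →ₗ[ℂ] H) (Q (R (x : H)))) with hS3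
  set S2 : (LinearMap.range (R : H →ₗ[ℂ] H)) →L[ℂ] (LinearMap.range (Q : H →ₗ[ℂ] H)) :=
    ((Q.comp R).comp (LinearMap.range (R : H →ₗ[ℂ] H)).subtypeL).codRestrict
      (LinearMap.range (Q : H →ₗ[ℂ] H)) (fun x => LinearMap.mem_range_self (Q : H →ₗ[ℂ] H) (R (x : H))) with hS2
  have eT1 : ∀ x : LinearMap.range (P : H →ₗ[ℂ] H), (T1 x : H) = Q (P x) := fun x => rfl
  have eT2 : ∀ x : LinearMap.range (Q : H →ₗ[ℂ] H), (T2 x : H) = R (Q x) := fun x => rfl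
  have eT3 : ∀ x : LinearMap.range (P : H →ₗ[ℂ] H), (T3 x : H) = R (Q (P x)) := fun x => rfl
  have eS1 : ∀ x : LinearMap.range (Q : H →ₗ[ℂ] H), (S1 x : H) = P (Q x) := fun x => rfl
  have eS2 : ∀ x : LinearMap.range (R : H →ₗ[ℂ] H), (S2 x : H) = Q (R x) := fun x => rfl
  have eS3 : ∀ x : LinearMap.range (R : H →ₗ[ℂ] H), (S3 x : H) = P (Q (R x)) := fun x => rfl
  -- compact building blocks
  have hQP : IsCompactOperator ⇑(Q - P) := compact_neg_sub hPQ
  have hRQ : IsCompactOperator ⇑(R - Q) := compact_neg_sub hQR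
  -- pair 1
  have h11 : IsCompactOperator ⇑(S1.comp T1 - 1) := by
    apply compact_perturb hEc _ (P.comp ((Q - P).comp P))
      (((hQP.comp_clm P).clm_comp P : IsCompactOperator (⇑P ∘ (⇑(Q - P) ∘ ⇑P))))
      (fun x _ => LinearMap.mem_range_self (P : H →ₗ[ℂ] H) _)
    intro x
    simp [eT1, eS1, ContinuousLinearMap.sub_apply, map_sub, hP2, hQ2, proj_fix hP x.2]
  have h12 : IsCompactOperator ⇑(T1.comp S1 - 1) := by
    apply compact_perturb hFc _ (Q.comp ((P - Q).comp Q))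
      (((hPQ.comp_clm Q).clm_comp Q : IsCompactOperator (⇑Q ∘ (⇑(P - Q) ∘ ⇑Q))))
      (fun x _ => LinearMap.mem_range_self (Q : H →ₗ[ℂ] H) _)
    intro x
    simp [eT1, eS1, ContinuousLinearMap.sub_apply, map_sub, hP2, hQ2, proj_fix hQ x.2]
  -- pair 2
  have h21 : IsCompactOperator ⇑(S2.comp T2 - 1) := by
    apply compact_perturb hFc _ (Q.comp ((R - Q).comp Q))
      (((hRQ.comp_clm Q).clm_comp Q : IsCompactOperator (⇑Q ∘ (⇑(R - Q) ∘ ⇑Q))))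
      (fun x _ => LinearMap.mem_range_self (Q : H →ₗ[ℂ] H) _)
    intro x
    simp [eT2, eS2, ContinuousLinearMap.sub_apply, map_sub, hQ2, hR2, proj_fix hQ x.2]
  have h22 : IsCompactOperator ⇑(T2.comp S2 - 1) := by
    apply compact_perturb hGc _ (R.comp ((Q - R).comp R))
      (((hQR.comp_clm R).clm_comp R : IsCompactOperator (⇑R ∘ (⇑(Q - R) ∘ ⇑R))))
      (fun x _ => LinearMap.mem_range_self (R : H →ₗ[ℂ] H) _)
    intro x
    simp [eT2, eS2, ContinuousLinearMap.sub_apply, map_sub, hQ2, hR2, proj_fix hR x.2]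
  -- pair 3
  have h31 : IsCompactOperator ⇑(S3.comp T3 - 1) := by
    have hc1 : IsCompactOperator
        ⇑(((P.comp Q).comp ((R - Q).comp (Q.comp P))) + (P.comp ((Q - P).comp P))) := by
      rw [ContinuousLinearMap.coe_add']
      exact IsCompactOperator.add
        (((hRQ.comp_clm (Q.comp P)).clm_comp (P.comp Q) :
          IsCompactOperator (⇑(P.comp Q) ∘ (⇑(R - Q) ∘ ⇑(Q.comp P)))))
        (((hQP.comp_clm P).clm_comp P : IsCompactOperator (⇑P ∘ (⇑(Q - P) ∘ ⇑P))))
    apply compact_perturb hEc _ _ hc1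
      (fun x _ => by
        simp only [ContinuousLinearMap.add_apply, ContinuousLinearMap.comp_apply]
        exact Submodule.add_mem _ (LinearMap.mem_range_self (P : H →ₗ[ℂ] H) _) (LinearMap.mem_range_self (P : H →ₗ[ℂ] H) _))
    intro x
    simp only [eT3, eS3, ContinuousLinearMap.sub_apply, ContinuousLinearMap.add_apply,
      ContinuousLinearMap.comp_apply, ContinuousLinearMap.coe_codRestrict_apply,
      Submodule.subtypeL_apply, ContinuousLinearMap.one_apply, Submodule.coe_sub, map_sub]
    rw [proj_fix hP x.2]
    simp [hP2, hQ2, hR2, map_sub, proj_fix hP x.2]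
  have h32 : IsCompactOperator ⇑(T3.comp S3 - 1) := by
    have hc1 : IsCompactOperator
        ⇑(((R.comp Q).comp ((P - Q).comp (Q.comp R))) + (R.comp ((Q - R).comp R))) := by
      rw [ContinuousLinearMap.coe_add']
      exact IsCompactOperator.add
        (((hPQ.comp_clm (Q.comp R)).clm_comp (R.comp Q) :
          IsCompactOperator (⇑(R.comp Q) ∘ (⇑(P - Q) ∘ ⇑(Q.comp R)))))
        (((hQR.comp_clm R).clm_comp R : IsCompactOperator (⇑R ∘ (⇑(Q - R) ∘ ⇑R))))
    apply compact_perturb hGc _ _ hc1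
      (fun x _ => by
        simp only [ContinuousLinearMap.add_apply, ContinuousLinearMap.comp_apply]
        exact Submodule.add_mem _ (LinearMap.mem_range_self (R : H →ₗ[ℂ] H) _) (LinearMap.mem_range_self (R : H →ₗ[ℂ] H) _))
    intro x
    simp only [eT3, eS3, ContinuousLinearMap.sub_apply, ContinuousLinearMap.add_apply,
      ContinuousLinearMap.comp_apply, ContinuousLinearMap.coe_codRestrict_apply,
      Submodule.subtypeL_apply, ContinuousLinearMap.one_apply, Submodule.coe_sub, map_sub]
    rw [proj_fix hR x.2]
    simp [hP2, hQ2, hR2, map_sub, proj_fix hR x.2]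
  obtain ⟨i1, i4⟩ := atkinson T1 S1 h11 h12
  obtain ⟨i2, i5⟩ := atkinson T2 S2 h21 h22
  obtain ⟨i3, i6⟩ := atkinson T3 S3 h31 h32
  have hT3eq : T3 = T2.comp T1 := by
    ext x
    simp [eT1, eT2, eT3, hQ2]
  rw [hT3eq] at i3 i6 ⊢
  simp only [findex]
  exact findex_comp T1 T2 i1 i2 i3 i4 i5 i6
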